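/- Let X = (X₁,…,X_p) be a square-integrable random vector in ℝ^p with covariance matrix Σ, let β ∈ ℝ^p, and let ε be a real random variable with mean zero and finite variance that is independent of X. Set Y = βᵀX + ε. Then for every γ > 0, the number of indices k ∈ {1,…,p} with |Cov(X_k, Y)| ≥ γ is at most λ_max(Σ)·Var(Y)/γ², where λ_max(Σ) denotes the largest eigenvalue of Σ. -/

import Mathlib

open MeasureTheory ProbabilityTheory Finset

/-- The covariance of two real random variables. -/
noncomputable def cov {Ω : Type*} [MeasurableSpace Ω] (P : Measure Ω) (f g : Ω → ℝ) : ℝ :=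
  ∫ ω, (f ω - ∫ ω', f ω' ∂P) * (g ω - ∫ ω', g ω' ∂P) ∂P

lemma integrable_mul_of_memL2 {Ω : Type*} [MeasurableSpace Ω] {P : Measure Ω} {f g : Ω → ℝ}
    (hf : MemLp f 2 P) (hg : MemLp g 2 P) : Integrable (fun ω => f ω * g ω) P := by
  have h : MemLp (f • g) 1 P := hg.smul hf
  exact memLp_one_iff_integrable.mp h

lemma dotProduct_mulVec_self {p : ℕ} (M : Matrix (Fin p) (Fin p) ℝ) (v : Fin p → ℝ) :
    dotProduct v (M.mulVec v) = ∑ k, ∑ l, v k * v l * M k l := by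
  simp only [dotProduct, Matrix.mulVec, Finset.mul_sum]
  exact Finset.sum_congr rfl fun k _ => Finset.sum_congr rfl fun l _ => by ring

/-- **Bound on the number of marginally correlated predictors in a linear model:** if
`Y = βᵀX + ε` with `ε` independent of `X` and mean zero, then for every `γ > 0` the number
of indices `k` with `|Cov(X_k, Y)| ≥ γ` is at most `λ_max(Σ) Var(Y) / γ²`, where
`Σ = Cov(X)` and `λ_max(Σ)` is its largest eigenvalue. -/
theorem card_marginally_correlated_le
    {Ω : Type*} [MeasurableSpace Ω] (P : Measure Ω) [IsProbabilityMeasure P]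
    (p : ℕ) (hp : 1 ≤ p)
    (X : Ω → (Fin p → ℝ)) (hXmeas : Measurable X)
    (hXL2 : ∀ k, MemLp (fun ω => X ω k) 2 P)
    (β : Fin p → ℝ)
    (ε : Ω → ℝ) (hεmeas : Measurable ε) (hεL2 : MemLp ε 2 P)
    (hεmean : ∫ ω, ε ω ∂P = 0) (hεindep : IndepFun ε X P)
    (Y : Ω → ℝ) (hYdef : ∀ ω, Y ω = (∑ k, β k * X ω k) + ε ω)
    (Sigm : Matrix (Fin p) (Fin p) ℝ)
    (hSigdef : ∀ k l, Sigm k l = cov P (fun ω => X ω k) (fun ω => X ω l))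
    (hHerm : Sigm.IsHermitian) :
    ∀ γ > (0 : ℝ),
      (((Finset.univ : Finset (Fin p)).filter
            (fun k => γ ≤ |cov P (fun ω => X ω k) Y|)).card : ℝ)
        ≤ ((Finset.univ : Finset (Fin p)).sup' ⟨⟨0, hp⟩, Finset.mem_univ _⟩
              hHerm.eigenvalues) * variance Y P / γ ^ 2 := by
  classical
  intro γ hγ
  set m : Fin p → ℝ := fun k => ∫ ω, X ω k ∂P with hm
  set Z : Fin p → Ω → ℝ := fun k ω => X ω k - m k with hZdef
  have hZL2 : ∀ k, MemLp (Z k) 2 P := fun k => (hXL2 k).sub (memLp_const (m k))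
  have hZint2 : ∀ k l, Integrable (fun ω => Z k ω * Z l ω) P :=
    fun k l => integrable_mul_of_memL2 (hZL2 k) (hZL2 l)
  have hSig : ∀ k l, Sigm k l = ∫ ω, Z k ω * Z l ω ∂P := fun k l => hSigdef k l
  -- quadratic form identity
  have hquad : ∀ v : Fin p → ℝ,
      (∫ ω, (∑ k, v k * Z k ω) ^ 2 ∂P) = ∑ k, ∑ l, v k * v l * Sigm k l := by
    intro v
    have hpt : ∀ ω, (∑ k, v k * Z k ω) ^ 2 = ∑ k, ∑ l, v k * v l * (Z k ω * Z l ω) := by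
      intro ω
      rw [sq, Finset.sum_mul_sum]
      exact Finset.sum_congr rfl fun k _ => Finset.sum_congr rfl fun l _ => by ring
    simp_rw [hpt]
    rw [integral_finset_sum _ (fun k _ => integrable_finset_sum _
      (fun l _ => ((hZint2 k l).const_mul _)))]
    refine Finset.sum_congr rfl fun k _ => ?_
    rw [integral_finset_sum _ (fun l _ => ((hZint2 k l).const_mul _))]
    exact Finset.sum_congr rfl fun l _ => by rw [integral_const_mul, ← hSig]
  have hpsd : ∀ v : Fin p → ℝ, 0 ≤ ∑ k, ∑ l, v k * v l * Sigm k l := by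
    intro v
    rw [← hquad v]
    exact integral_nonneg fun ω => sq_nonneg _
  have hPSD : Sigm.PosSemidef := by
    refine Matrix.posSemidef_iff_dotProduct_mulVec.mpr ⟨hHerm, fun x => ?_⟩
    rw [star_trivial, dotProduct_mulVec_self]
    exact hpsd x
  -- integrability and means
  have hXint : ∀ k, Integrable (fun ω => X ω k) P := fun k => (hXL2 k).integrable one_le_two
  have hεint : Integrable ε P := hεL2.integrable one_le_two
  have hSint : Integrable (fun ω => ∑ k, β k * X ω k) P :=
    integrable_finset_sum _ fun k _ => (hXint k).const_mul _
  have hYeq : Y = fun ω => (∑ k, β k * X ω k) + ε ω := funext hYdef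
  have hYmean : ∫ ω, Y ω ∂P = ∑ k, β k * m k := by
    rw [hYeq]
    rw [integral_add hSint hεint, hεmean, add_zero,
      integral_finset_sum _ (fun k _ => (hXint k).const_mul _)]
    exact Finset.sum_congr rfl fun k _ => by rw [integral_const_mul]
  have hYcent : ∀ ω, Y ω - (∫ ω', Y ω' ∂P) = (∑ l, β l * Z l ω) + ε ω := by
    intro ω
    rw [hYdef ω, hYmean]
    have : (∑ l, β l * X ω l) + ε ω - ∑ l, β l * m l
        = ((∑ l, β l * X ω l) - ∑ l, β l * m l) + ε ω := by ring
    rw [this, ← Finset.sum_sub_distrib]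
    simp_rw [← mul_sub]
    rfl
  -- independence of ε from the centered coordinates
  have hZind : ∀ k, IndepFun ε (Z k) P := by
    intro k
    exact hεindep.comp measurable_id ((measurable_pi_apply k).sub measurable_const)
  have hZmean : ∀ k, ∫ ω, Z k ω ∂P = 0 := by
    intro k
    rw [hZdef]
    simp only
    rw [integral_sub (hXint k) (integrable_const _), integral_const]
    simp [hm]
  have hZεint : ∀ k, Integrable (fun ω => Z k ω * ε ω) P :=
    fun k => integrable_mul_of_memL2 (hZL2 k) hεL2
  have hZε : ∀ k, ∫ ω, Z k ω * ε ω ∂P = 0 := by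
    intro k
    have h := (hZind k).integral_mul_eq_mul_integral hεL2.1 (hZL2 k).1
    simp_rw [mul_comm (Z k _) (ε _)]
    calc (∫ ω, ε ω * Z k ω ∂P) = ∫ ω, (ε * Z k) ω ∂P := by rfl
      _ = (∫ ω, ε ω ∂P) * ∫ ω, Z k ω ∂P := h
      _ = 0 := by rw [hεmean, zero_mul]
  -- covariance formula : cov (X k) Y = (Sigm *ᵥ β) k
  have hcov : ∀ k, cov P (fun ω => X ω k) Y = (Sigm.mulVec β) k := by
    intro k
    have : cov P (fun ω => X ω k) Y
        = ∫ ω, Z k ω * ((∑ l, β l * Z l ω) + ε ω) ∂P := by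
      unfold cov
      refine integral_congr_ae (ae_of_all _ fun ω => ?_)
      show (X ω k - ∫ ω', X ω' k ∂P) * (Y ω - ∫ ω', Y ω' ∂P)
          = Z k ω * ((∑ l, β l * Z l ω) + ε ω)
      rw [hYcent ω]
    rw [this]
    have hint1 : Integrable (fun ω => Z k ω * ∑ l, β l * Z l ω) P := by
      have : (fun ω => Z k ω * ∑ l, β l * Z l ω)
          = fun ω => ∑ l, β l * (Z k ω * Z l ω) := by
        funext ω; rw [Finset.mul_sum]; exact Finset.sum_congr rfl fun l _ => by ring
      rw [this]
      exact integrable_finset_sum _ fun l _ => (hZint2 k l).const_mul _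
    have hsplit : (∫ ω, Z k ω * ((∑ l, β l * Z l ω) + ε ω) ∂P)
        = (∫ ω, Z k ω * ∑ l, β l * Z l ω ∂P) + ∫ ω, Z k ω * ε ω ∂P := by
      rw [← integral_add hint1 (hZεint k)]
      exact integral_congr_ae (ae_of_all _ fun ω => by ring)
    rw [hsplit, hZε k, add_zero]
    have : (fun ω => Z k ω * ∑ l, β l * Z l ω)
        = fun ω => ∑ l, β l * (Z k ω * Z l ω) := by
      funext ω; rw [Finset.mul_sum]; exact Finset.sum_congr rfl fun l _ => by ring
    rw [this, integral_finset_sum _ (fun l _ => (hZint2 k l).const_mul _)]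
    simp_rw [integral_const_mul]
    rw [Matrix.mulVec]
    simp only [dotProduct]
    exact Finset.sum_congr rfl fun l _ => by rw [← hSig]; ring
  -- variance of Y
  have hSL2 : MemLp (fun ω => ∑ k, β k * X ω k) 2 P := by
    have h := memLp_finset_sum' (μ := P) (p := 2) Finset.univ
      (fun k (_ : k ∈ Finset.univ) => (hXL2 k).const_mul (β k))
    have heq : (∑ k : Fin p, fun ω => β k * X ω k) = fun ω => ∑ k, β k * X ω k := by
      funext ω; simp
    rwa [heq] at h
  have hmeasS : Measurable (fun v : Fin p → ℝ => ∑ k, β k * v k) :=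
    Finset.measurable_sum _ fun k _ => (measurable_pi_apply k).const_mul _
  have hindSε : IndepFun (fun ω => ∑ k, β k * X ω k) ε P :=
    (hεindep.comp measurable_id hmeasS).symm
  have hvarYsplit : variance Y P
      = variance (fun ω => ∑ k, β k * X ω k) P + variance ε P := by
    rw [hYeq]
    exact hindSε.variance_add hSL2 hεL2
  have hSmean : ∫ ω, (∑ k, β k * X ω k) ∂P = ∑ k, β k * m k := by
    rw [integral_finset_sum _ (fun k _ => (hXint k).const_mul _)]
    exact Finset.sum_congr rfl fun k _ => by rw [integral_const_mul]
  have hvarS : variance (fun ω => ∑ k, β k * X ω k) P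
      = ∑ k, ∑ l, β k * β l * Sigm k l := by
    rw [variance_eq_integral hSL2.1.aemeasurable, ← hquad β]
    refine integral_congr_ae (ae_of_all _ fun ω => ?_)
    show ((∑ k, β k * X ω k) - ∫ ω', (∑ k, β k * X ω' k) ∂P) ^ 2
        = (∑ k, β k * Z k ω) ^ 2
    rw [hSmean, ← Finset.sum_sub_distrib]
    simp_rw [← mul_sub]
    rfl
  -- spectral decomposition
  set ev : Fin p → ℝ := hHerm.eigenvalues with hev
  set lmax : ℝ := Finset.univ.sup' ⟨⟨0, hp⟩, Finset.mem_univ _⟩ hHerm.eigenvalues with hlm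
  have hev0 : ∀ i, 0 ≤ ev i := fun i => hPSD.eigenvalues_nonneg i
  have hevle : ∀ i, ev i ≤ lmax := fun i => Finset.le_sup' _ (Finset.mem_univ i)
  have hlmax0 : (0 : ℝ) ≤ lmax := le_trans (hev0 ⟨0, hp⟩) (hevle ⟨0, hp⟩)
  set V : Matrix (Fin p) (Fin p) ℝ := (hHerm.eigenvectorUnitary : Matrix (Fin p) (Fin p) ℝ)
    with hV
  have hstarV : star V * V = 1 := by
    rw [hV]
    exact Unitary.coe_star_mul_self hHerm.eigenvectorUnitary
  have htr : V.transpose = star V := by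
    rw [Matrix.star_eq_conjTranspose, Matrix.conjTranspose_eq_transpose_of_trivial]
  have hspec : Sigm = V * Matrix.diagonal ev * star V := by
    have h := hHerm.spectral_theorem
    rwa [RCLike.ofReal_real_eq_id, Function.id_comp] at h
  set w : Fin p → ℝ := (star V).mulVec β with hw
  have hSb : Sigm.mulVec β = V.mulVec ((Matrix.diagonal ev).mulVec w) := by
    rw [hspec, ← Matrix.mulVec_mulVec, ← Matrix.mulVec_mulVec]
  have hdot1 : ∀ x y : Fin p → ℝ,
      dotProduct (V.mulVec x) (V.mulVec y) = dotProduct x y := by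
    intro x y
    rw [Matrix.dotProduct_mulVec, ← Matrix.mulVec_transpose, htr, Matrix.mulVec_mulVec,
      hstarV, Matrix.one_mulVec]
  have hβV : ∀ x : Fin p → ℝ,
      dotProduct β (V.mulVec x) = dotProduct w x := by
    intro x
    rw [Matrix.dotProduct_mulVec, ← Matrix.mulVec_transpose, htr, hw]
  have hq1 : dotProduct β (Sigm.mulVec β) = ∑ i, ev i * w i ^ 2 := by
    rw [hSb, hβV]
    simp only [dotProduct, Matrix.mulVec_diagonal]
    exact Finset.sum_congr rfl fun i _ => by ring
  have hq2 : dotProduct (Sigm.mulVec β) (Sigm.mulVec β)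
      = ∑ i, (ev i * w i) ^ 2 := by
    rw [hSb, hdot1]
    simp only [dotProduct, Matrix.mulVec_diagonal]
    exact Finset.sum_congr rfl fun i _ => by ring
  -- assembling everything
  have hsum_sq : ∑ k, (cov P (fun ω => X ω k) Y) ^ 2 = ∑ i, (ev i * w i) ^ 2 := by
    rw [← hq2]
    simp only [dotProduct]
    exact Finset.sum_congr rfl fun k _ => by rw [hcov k, sq]
  have hstep1 : (((Finset.univ : Finset (Fin p)).filter
        (fun k => γ ≤ |cov P (fun ω => X ω k) Y|)).card : ℝ) * γ ^ 2
      ≤ ∑ k, (cov P (fun ω => X ω k) Y) ^ 2 := by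
    have h1 : (((Finset.univ : Finset (Fin p)).filter
          (fun k => γ ≤ |cov P (fun ω => X ω k) Y|)).card : ℝ) * γ ^ 2
        = ∑ _k ∈ (Finset.univ : Finset (Fin p)).filter
            (fun k => γ ≤ |cov P (fun ω => X ω k) Y|), γ ^ 2 := by
      rw [Finset.sum_const, nsmul_eq_mul]
    rw [h1]
    refine le_trans (Finset.sum_le_sum fun k hk => ?_)
      (Finset.sum_le_sum_of_subset_of_nonneg (Finset.filter_subset _ _)
        fun k _ _ => sq_nonneg _)
    have hk' := (Finset.mem_filter.mp hk).2
    calc γ ^ 2 ≤ |cov P (fun ω => X ω k) Y| ^ 2 := pow_le_pow_left₀ hγ.le hk' 2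
      _ = (cov P (fun ω => X ω k) Y) ^ 2 := sq_abs _
  have hstep2 : ∑ i, (ev i * w i) ^ 2 ≤ lmax * ∑ i, ev i * w i ^ 2 := by
    rw [Finset.mul_sum]
    refine Finset.sum_le_sum fun i _ => ?_
    calc (ev i * w i) ^ 2 = ev i * (ev i * w i ^ 2) := by ring
      _ ≤ lmax * (ev i * w i ^ 2) :=
        mul_le_mul_of_nonneg_right (hevle i) (mul_nonneg (hev0 i) (sq_nonneg _))
  have hstep3 : ∑ i, ev i * w i ^ 2 ≤ variance Y P := by
    rw [hvarYsplit]
    have : ∑ i, ev i * w i ^ 2 = variance (fun ω => ∑ k, β k * X ω k) P := by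
      rw [hvarS, ← dotProduct_mulVec_self, hq1]
    rw [this]
    exact le_add_of_nonneg_right (variance_nonneg _ _)
  rw [le_div_iff₀ (by positivity : (0:ℝ) < γ ^ 2)]
  calc (((Finset.univ : Finset (Fin p)).filter
        (fun k => γ ≤ |cov P (fun ω => X ω k) Y|)).card : ℝ) * γ ^ 2
      ≤ ∑ k, (cov P (fun ω => X ω k) Y) ^ 2 := hstep1
    _ = ∑ i, (ev i * w i) ^ 2 := hsum_sq
    _ ≤ lmax * ∑ i, ev i * w i ^ 2 := hstep2
    _ ≤ lmax * variance Y P := mul_le_mul_of_nonneg_left hstep3 hlmax0
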